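/- arXiv:2504.16425 — 5 statements merged into one kernel-verified Lean document; each statement's English description precedes it below -/
import Mathlib

section
/- Let k > 0 and define h₂(z) := −15/(2k²) + cos(2z)/(2k²). Then h₂ is an even 2π-periodic function satisfying k²·( h₂⁗(z) − h₂(z) ) = 15 cos²(z) for all z ∈ ℝ. This is the unique correction at order a² in the small-amplitude expansion of the CDG–SK periodic traveling wave, and the corresponding speed correction at order a vanishes (c₁ = 0). -/
open Real intervalIntegral


/-- The order-`a²` correction in the small-amplitude expansion of the CDG–SK periodic wave:
`h₂(z) = −15/(2k²) + cos(2z)/(2k²)`. -/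
noncomputable def cdgskH2 (k : ℝ) : ℝ → ℝ := fun z =>
  -(15 / (2 * k ^ 2)) + Real.cos (2 * z) / (2 * k ^ 2)


lemma periodic_deriv_of_periodic {f : ℝ → ℝ} {c : ℝ} (hf : Function.Periodic f c) :
    Function.Periodic (deriv f) c := by
  intro x
  have h1 : (fun y => f (y + c)) = f := funext fun y => hf y
  calc deriv f (x + c) = deriv (fun y => f (y + c)) x := (deriv_comp_add_const f c x).symm
    _ = deriv f x := by rw [h1]

lemma periodic_iteratedDeriv_of_periodic {f : ℝ → ℝ} {c : ℝ} (hf : Function.Periodic f c)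
    (n : ℕ) : Function.Periodic (iteratedDeriv n f) c := by
  induction n with
  | zero => simpa [iteratedDeriv_zero] using hf
  | succ n ih => rw [iteratedDeriv_succ]; exact periodic_deriv_of_periodic ih

lemma expODE_zero {f : ℝ → ℝ} {a : ℝ} (ha : a ≠ 0)
    (hf : ∀ z, HasDerivAt f (a * f z) z) (hper : Function.Periodic f (2 * Real.pi)) :
    ∀ z, f z = 0 := by
  set F : ℝ → ℝ := fun z => f z * Real.exp (-a * z) with hF
  have hFd : ∀ z, HasDerivAt F 0 z := by
    intro z
    have he : HasDerivAt (fun z : ℝ => Real.exp (-a * z)) (Real.exp (-a * z) * (-a)) z := by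
      have hi : HasDerivAt (fun z : ℝ => -a * z) (-a) z := by
        simpa using (hasDerivAt_id z).const_mul (-a)
      exact hi.exp
    have := (hf z).mul he
    refine this.congr_deriv ?_
    ring
  have hFc : ∀ x y, F x = F y :=
    is_const_of_deriv_eq_zero (fun z => (hFd z).differentiableAt) (fun z => (hFd z).deriv)
  have hfz : ∀ z, f z = f 0 * Real.exp (a * z) := by
    intro z
    have h1 : F z = F 0 := hFc z 0
    have h2 : f z * Real.exp (-a * z) = f 0 := by simpa [hF] using h1
    have h3 := congrArg (fun t => t * Real.exp (a * z)) h2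
    simpa [mul_assoc, ← Real.exp_add, neg_mul] using h3
  have hp : f 0 * Real.exp (a * (2 * Real.pi)) = f 0 := by
    have := hper 0
    rw [zero_add] at this
    rw [hfz (2 * Real.pi)] at this
    simpa using this
  have hf0 : f 0 = 0 := by
    have hz : f 0 * (Real.exp (a * (2 * Real.pi)) - 1) = 0 := by linear_combination hp
    rcases mul_eq_zero.mp hz with h0 | h0
    · exact h0
    · exfalso
      have : Real.exp (a * (2 * Real.pi)) = 1 := by linarith
      rw [Real.exp_eq_one_iff] at this
      exact (mul_ne_zero ha (by positivity)) this
  intro z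
  rw [hfz z, hf0, zero_mul]

lemma harmonicODE_zero {f f' : ℝ → ℝ} (h1 : ∀ z, HasDerivAt f (f' z) z)
    (h2 : ∀ z, HasDerivAt f' (-f z) z) (h0 : f 0 = 0) (h0' : f' 0 = 0) :
    ∀ z, f z = 0 := by
  set Q : ℝ → ℝ := fun z => f z ^ 2 + f' z ^ 2 with hQ
  have hQd : ∀ z, HasDerivAt Q 0 z := by
    intro z
    have := ((h1 z).pow 2).add ((h2 z).pow 2)
    refine this.congr_deriv ?_
    ring
  have hQc : ∀ x y, Q x = Q y :=
    is_const_of_deriv_eq_zero (fun z => (hQd z).differentiableAt) (fun z => (hQd z).deriv)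
  intro z
  have := hQc z 0
  simp only [hQ, h0, h0'] at this
  nlinarith [sq_nonneg (f z), sq_nonneg (f' z), this]

lemma ibp_periodic_step {f f' g g' : ℝ → ℝ}
    (hf : ∀ x, HasDerivAt f (f' x) x) (hf'c : Continuous f') (hfp : f (2 * Real.pi) = f 0)
    (hg : ∀ x, HasDerivAt g (g' x) x) (hg'c : Continuous g') (hgp : g (2 * Real.pi) = g 0) :
    ∫ z in (0:ℝ)..(2 * Real.pi), g z * f' z = - ∫ z in (0:ℝ)..(2 * Real.pi), g' z * f z := by
  have := intervalIntegral.integral_mul_deriv_eq_deriv_mul (a := 0) (b := 2*Real.pi)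
    (u := g) (v := f) (u' := g') (v' := f')
    (fun x _ => hg x) (fun x _ => hf x)
    (hg'c.intervalIntegrable _ _) (hf'c.intervalIntegrable _ _)
  rw [this, hfp, hgp]
  ring



lemma hasDerivAt_two_mul (z : ℝ) : HasDerivAt (fun y : ℝ => 2 * y) 2 z := by
  simpa using (hasDerivAt_id z).const_mul 2

lemma cdgskH2_hasDerivAt (k : ℝ) (z : ℝ) :
    HasDerivAt (cdgskH2 k) (-2 * Real.sin (2 * z) / (2 * k ^ 2)) z := by
  have h := ((hasDerivAt_two_mul z).cos.div_const (2 * k ^ 2)).const_add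
    (-(15 / (2 * k ^ 2)))
  refine h.congr_deriv ?_
  ring

lemma cdgskH2_deriv4 (k : ℝ) :
    iteratedDeriv 4 (cdgskH2 k) = fun z => 16 * Real.cos (2 * z) / (2 * k ^ 2) := by
  have e1 : deriv (cdgskH2 k) = fun z => -2 * Real.sin (2 * z) / (2 * k ^ 2) :=
    funext fun z => (cdgskH2_hasDerivAt k z).deriv
  have e2 : deriv (fun z => -2 * Real.sin (2 * z) / (2 * k ^ 2))
      = fun z => -4 * Real.cos (2 * z) / (2 * k ^ 2) := by
    funext z
    have h := (((hasDerivAt_two_mul z).sin.const_mul (-2)).div_const (2 * k ^ 2))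
    have h' : HasDerivAt (fun z => -2 * Real.sin (2 * z) / (2 * k ^ 2))
        (-4 * Real.cos (2 * z) / (2 * k ^ 2)) z := by
      refine h.congr_deriv ?_; ring
    exact h'.deriv
  have e3 : deriv (fun z => -4 * Real.cos (2 * z) / (2 * k ^ 2))
      = fun z => 8 * Real.sin (2 * z) / (2 * k ^ 2) := by
    funext z
    have h := (((hasDerivAt_two_mul z).cos.const_mul (-4)).div_const (2 * k ^ 2))
    have h' : HasDerivAt (fun z => -4 * Real.cos (2 * z) / (2 * k ^ 2))
        (8 * Real.sin (2 * z) / (2 * k ^ 2)) z := by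
      refine h.congr_deriv ?_; ring
    exact h'.deriv
  have e4 : deriv (fun z => 8 * Real.sin (2 * z) / (2 * k ^ 2))
      = fun z => 16 * Real.cos (2 * z) / (2 * k ^ 2) := by
    funext z
    have h := (((hasDerivAt_two_mul z).sin.const_mul (8 : ℝ)).div_const (2 * k ^ 2))
    have h' : HasDerivAt (fun z => 8 * Real.sin (2 * z) / (2 * k ^ 2))
        (16 * Real.cos (2 * z) / (2 * k ^ 2)) z := by
      refine h.congr_deriv ?_; ring
    exact h'.deriv
  have : iteratedDeriv 4 (cdgskH2 k) = deriv (deriv (deriv (deriv (cdgskH2 k)))) := by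
    rw [iteratedDeriv_eq_iterate]
    rfl
  rw [this, e1, e2, e3, e4]

lemma integral_cos_two_mul_cos : ∫ z in (0:ℝ)..(2 * Real.pi), Real.cos (2 * z) * Real.cos z = 0 := by
  have hder : ∀ z : ℝ, HasDerivAt (fun z => Real.sin (3 * z) / 6 + Real.sin z / 2)
      (Real.cos (2 * z) * Real.cos z) z := by
    intro z
    have h3 : HasDerivAt (fun y : ℝ => 3 * y) 3 z := by
      simpa using (hasDerivAt_id z).const_mul 3
    have h := (h3.sin.div_const 6).add ((Real.hasDerivAt_sin z).div_const 2)
    refine h.congr_deriv ?_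
    have key : Real.cos (2 * z) * Real.cos z + Real.sin (2 * z) * Real.sin z = Real.cos z := by
      rw [← Real.cos_sub]
      congr 1
      ring
    have h3z : Real.cos (3 * z) = Real.cos (2 * z) * Real.cos z - Real.sin (2 * z) * Real.sin z := by
      rw [show (3:ℝ) * z = 2 * z + z by ring, Real.cos_add]
    rw [h3z]
    linarith
  have := intervalIntegral.integral_eq_sub_of_hasDerivAt (a := 0) (b := 2 * Real.pi)
    (fun z _ => hder z)
    (Continuous.intervalIntegrable (by continuity) _ _)
  rw [this]
  simp [Real.sin_two_pi, show (3:ℝ) * (2 * Real.pi) = 2 * Real.pi + 2 * Real.pi + 2 * Real.pi by ring,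
    Real.sin_add_two_pi]

lemma integral_cdgskH2_mul_cos (k : ℝ) :
    ∫ z in (0:ℝ)..(2 * Real.pi), cdgskH2 k z * Real.cos z = 0 := by
  have h1 : ∀ z : ℝ, cdgskH2 k z * Real.cos z
      = -(15 / (2 * k ^ 2)) * Real.cos z + (Real.cos (2 * z) * Real.cos z) / (2 * k ^ 2) := by
    intro z; simp only [cdgskH2]; ring
  rw [intervalIntegral.integral_congr (fun z _ => h1 z)]
  rw [intervalIntegral.integral_add
    ((Continuous.intervalIntegrable (by continuity) _ _))
    ((Continuous.intervalIntegrable (by continuity) _ _)),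
    intervalIntegral.integral_const_mul, intervalIntegral.integral_div,
    integral_cos, integral_cos_two_mul_cos]
  simp

lemma integral_cos_sq_two_pi : ∫ z in (0:ℝ)..(2 * Real.pi), Real.cos z ^ 2 = Real.pi := by
  rw [integral_cos_sq]
  simp [Real.sin_two_pi, Real.cos_two_pi]

lemma integral_cos_cube_two_pi : ∫ z in (0:ℝ)..(2 * Real.pi), Real.cos z ^ 3 = 0 := by
  rw [integral_cos_pow_three]
  simp [Real.sin_two_pi]


/-- **The second-order correction of the CDG–SK expansion.**
For `k > 0`, `h₂(z) = −15/(2k²) + cos(2z)/(2k²)` is even, `2π`-periodic, and satisfies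
`k² (h₂⁗ − h₂) = 15 cos² z`.  Moreover it is the unique correction at order `a²`:
if `c₁ ∈ ℝ` and `h` is a `C⁴`, even, `2π`-periodic function orthogonal to `cos`
satisfying the `O(a²)` equation `−k⁴(h − h⁗) − c₁ cos z − 15 k² cos² z = 0`,
then `c₁ = 0` and `h = h₂`. -/
theorem cdgsk_second_order_correction (k : ℝ) (hk : 0 < k) :
    ((∀ z : ℝ, cdgskH2 k (-z) = cdgskH2 k z) ∧
      Function.Periodic (cdgskH2 k) (2 * Real.pi) ∧
      (∀ z : ℝ, k ^ 2 * (iteratedDeriv 4 (cdgskH2 k) z - cdgskH2 k z)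
          = 15 * (Real.cos z) ^ 2)) ∧
    (∀ (c₁ : ℝ) (h : ℝ → ℝ), ContDiff ℝ 4 h →
      (∀ z : ℝ, h (-z) = h z) →
      Function.Periodic h (2 * Real.pi) →
      (∫ z in (0 : ℝ)..(2 * Real.pi), h z * Real.cos z) = 0 →
      (∀ z : ℝ, -(k ^ 4) * (h z - iteratedDeriv 4 h z) - c₁ * Real.cos z
          - 15 * k ^ 2 * (Real.cos z) ^ 2 = 0) →
      c₁ = 0 ∧ ∀ z : ℝ, h z = cdgskH2 k z) := by
  have hk2 : (k : ℝ) ^ 2 ≠ 0 := by positivity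
  have hk4 : (k : ℝ) ^ 4 ≠ 0 := by positivity
  -- part 1 facts
  have hH2even : ∀ z : ℝ, cdgskH2 k (-z) = cdgskH2 k z := by
    intro z
    simp only [cdgskH2]
    rw [show 2 * (-z) = -(2 * z) by ring, Real.cos_neg]
  have hH2per : Function.Periodic (cdgskH2 k) (2 * Real.pi) := by
    intro z
    simp only [cdgskH2]
    rw [show 2 * (z + 2 * Real.pi) = 2 * z + 2 * Real.pi + 2 * Real.pi by ring,
      Real.cos_add_two_pi, Real.cos_add_two_pi]
  have hH2eq : ∀ z : ℝ, k ^ 2 * (iteratedDeriv 4 (cdgskH2 k) z - cdgskH2 k z)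
      = 15 * Real.cos z ^ 2 := by
    intro z
    rw [cdgskH2_deriv4]
    simp only [cdgskH2]
    rw [Real.cos_two_mul]
    field_simp
    ring
  refine ⟨⟨hH2even, hH2per, hH2eq⟩, ?_⟩
  intro c₁ h hh heven hper horth hode
  -- scaffolding for h
  have hcont : ∀ n : ℕ, n ≤ 4 → Continuous (iteratedDeriv n h) := by
    intro n hn
    exact hh.continuous_iteratedDeriv n (by exact_mod_cast hn)
  have hDer : ∀ n : ℕ, n < 4 → ∀ z : ℝ,
      HasDerivAt (iteratedDeriv n h) (iteratedDeriv (n + 1) h z) z := by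
    intro n hn z
    rw [iteratedDeriv_succ]
    exact ((hh.differentiable_iteratedDeriv n (by exact_mod_cast hn)) z).hasDerivAt
  have hends : ∀ n : ℕ, iteratedDeriv n h (2 * Real.pi) = iteratedDeriv n h 0 := by
    intro n
    simpa using periodic_iteratedDeriv_of_periodic hper n 0
  -- integration by parts, four times
  have ibp4 : (∫ z in (0:ℝ)..(2 * Real.pi), Real.cos z * iteratedDeriv 4 h z)
      = ∫ z in (0:ℝ)..(2 * Real.pi), Real.cos z * h z := by
    have s1 := ibp_periodic_step (hDer 3 (by norm_num)) (hcont 4 le_rfl) (hends 3)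
      (fun x => Real.hasDerivAt_cos x) (by continuity) (by simp)
    have s2 := ibp_periodic_step (hDer 2 (by norm_num)) (hcont 3 (by norm_num)) (hends 2)
      (fun x => Real.hasDerivAt_sin x) Real.continuous_cos (by simp)
    have s3 := ibp_periodic_step (hDer 1 (by norm_num)) (hcont 2 (by norm_num)) (hends 1)
      (fun x => Real.hasDerivAt_cos x) (by continuity) (by simp)
    have s4 := ibp_periodic_step (hDer 0 (by norm_num)) (hcont 1 (by norm_num)) (hends 0)
      (fun x => Real.hasDerivAt_sin x) Real.continuous_cos (by simp)
    have hneg : ∀ (F : ℝ → ℝ), (∫ z in (0:ℝ)..(2 * Real.pi), -Real.sin z * F z)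
        = - ∫ z in (0:ℝ)..(2 * Real.pi), Real.sin z * F z := by
      intro F
      rw [← intervalIntegral.integral_neg]
      congr 1
      funext z
      ring
    calc (∫ z in (0:ℝ)..(2 * Real.pi), Real.cos z * iteratedDeriv 4 h z)
        = - ∫ z in (0:ℝ)..(2 * Real.pi), -Real.sin z * iteratedDeriv 3 h z := s1
      _ = ∫ z in (0:ℝ)..(2 * Real.pi), Real.sin z * iteratedDeriv 3 h z := by
          rw [hneg]; ring
      _ = - ∫ z in (0:ℝ)..(2 * Real.pi), Real.cos z * iteratedDeriv 2 h z := s2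
      _ = - - ∫ z in (0:ℝ)..(2 * Real.pi), -Real.sin z * iteratedDeriv 1 h z := by rw [s3]
      _ = - ∫ z in (0:ℝ)..(2 * Real.pi), Real.sin z * iteratedDeriv 1 h z := by
          rw [hneg]; ring
      _ = - - ∫ z in (0:ℝ)..(2 * Real.pi), Real.cos z * iteratedDeriv 0 h z := by rw [s4]
      _ = ∫ z in (0:ℝ)..(2 * Real.pi), Real.cos z * h z := by
          rw [neg_neg, iteratedDeriv_zero]
  -- c₁ = 0
  have hc1 : c₁ = 0 := by
    have hptw : ∀ z : ℝ, k ^ 4 * (Real.cos z * iteratedDeriv 4 h z - Real.cos z * h z)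
        = c₁ * Real.cos z ^ 2 + 15 * k ^ 2 * Real.cos z ^ 3 := by
      intro z
      linear_combination Real.cos z * hode z
    have hIL : (∫ z in (0:ℝ)..(2 * Real.pi),
        k ^ 4 * (Real.cos z * iteratedDeriv 4 h z - Real.cos z * h z)) = 0 := by
      rw [intervalIntegral.integral_const_mul, intervalIntegral.integral_sub
        (f := fun z => Real.cos z * iteratedDeriv 4 h z) (g := fun z => Real.cos z * h z)
        ((Real.continuous_cos.mul (hcont 4 le_rfl)).intervalIntegrable _ _)
        ((Real.continuous_cos.mul (hh.continuous)).intervalIntegrable _ _), ibp4]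
      ring
    have hIR : (∫ z in (0:ℝ)..(2 * Real.pi),
        (c₁ * Real.cos z ^ 2 + 15 * k ^ 2 * Real.cos z ^ 3)) = c₁ * Real.pi := by
      rw [intervalIntegral.integral_add
        ((Continuous.intervalIntegrable (by continuity) _ _))
        ((Continuous.intervalIntegrable (by continuity) _ _)),
        intervalIntegral.integral_const_mul, intervalIntegral.integral_const_mul,
        integral_cos_sq_two_pi, integral_cos_cube_two_pi]
      ring
    have := intervalIntegral.integral_congr (a := (0:ℝ)) (b := 2 * Real.pi)
      (μ := MeasureTheory.volume) (fun z _ => hptw z)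
    rw [hIL, hIR] at this
    have hpi := Real.pi_ne_zero
    field_simp at this
    exact (mul_eq_zero.mp this.symm).resolve_right hpi
  refine ⟨hc1, ?_⟩
  -- the difference g
  set g : ℝ → ℝ := fun z => h z - cdgskH2 k z with hgdef
  have hH2smooth : ContDiff ℝ 4 (cdgskH2 k) := by
    unfold cdgskH2
    exact contDiff_const.add ((Real.contDiff_cos.comp (contDiff_const.mul contDiff_id)).div_const _)
  have hgC : ContDiff ℝ 4 g := hh.sub hH2smooth
  have hi4 : ∀ z : ℝ, iteratedDeriv 4 g z
      = iteratedDeriv 4 h z - iteratedDeriv 4 (cdgskH2 k) z := by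
    intro z
    have := iteratedDerivWithin_sub (Set.mem_univ z) uniqueDiffOn_univ
      (n := 4) (ContDiff.contDiffWithinAt (hh.of_le (by norm_num)))
      (ContDiff.contDiffWithinAt (hH2smooth.of_le (by norm_num)))
    simp only [iteratedDerivWithin_univ] at this
    exact this
  have hg4 : ∀ z : ℝ, iteratedDeriv 4 g z = g z := by
    intro z
    have hH4 : iteratedDeriv 4 h z = h z + 15 * Real.cos z ^ 2 / k ^ 2 := by
      have h0 := hode z
      rw [hc1] at h0
      have h0' : k ^ 2 * (iteratedDeriv 4 h z * k ^ 2 - h z * k ^ 2 - 15 * Real.cos z ^ 2) = 0 := by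
        linear_combination h0
      rcases mul_eq_zero.mp h0' with hx | hx
      · exact absurd hx hk2
      · field_simp
        linarith
    have e1 : iteratedDeriv 4 (cdgskH2 k) z = cdgskH2 k z + 15 * Real.cos z ^ 2 / k ^ 2 := by
      rw [cdgskH2_deriv4]
      simp only [cdgskH2]
      rw [Real.cos_two_mul]
      field_simp
      ring
    rw [hi4 z, hH4, e1, hgdef]
    ring
  have hgDer : ∀ n : ℕ, n < 4 → ∀ z : ℝ,
      HasDerivAt (iteratedDeriv n g) (iteratedDeriv (n + 1) g z) z := by
    intro n hn z
    rw [iteratedDeriv_succ]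
    exact ((hgC.differentiable_iteratedDeriv n (by exact_mod_cast hn)) z).hasDerivAt
  have hgDer0 : ∀ z : ℝ, HasDerivAt g (iteratedDeriv 1 g z) z := by
    intro z
    have := hgDer 0 (by norm_num) z
    rwa [iteratedDeriv_zero] at this
  have hgper : Function.Periodic g (2 * Real.pi) := by
    intro z
    simp only [hgdef]
    rw [hper z, hH2per z]
  have hgperN : ∀ n : ℕ, Function.Periodic (iteratedDeriv n g) (2 * Real.pi) :=
    fun n => periodic_iteratedDeriv_of_periodic hgper n
  -- u = g'' + g satisfies u'' = u; kill it with exponentials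
  set u : ℝ → ℝ := fun z => iteratedDeriv 2 g z + g z with hudef
  set u' : ℝ → ℝ := fun z => iteratedDeriv 3 g z + iteratedDeriv 1 g z with hu'def
  have hu : ∀ z, HasDerivAt u (u' z) z := fun z => (hgDer 2 (by norm_num) z).add (hgDer0 z)
  have hu' : ∀ z, HasDerivAt u' (u z) z := by
    intro z
    have h1 := (hgDer 3 (by norm_num) z).add (hgDer 1 (by norm_num) z)
    have h2 : iteratedDeriv 4 g z + iteratedDeriv 2 g z = u z := by
      rw [hg4 z, hudef]
      ring
    rwa [h2] at h1
  have huper : Function.Periodic u (2 * Real.pi) := by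
    intro z
    simp only [hudef]
    rw [hgperN 2 z, hgper z]
  have hu'per : Function.Periodic u' (2 * Real.pi) := by
    intro z
    simp only [hu'def]
    rw [hgperN 3 z, hgperN 1 z]
  have hv0 : ∀ z : ℝ, u' z + u z = 0 := by
    apply expODE_zero (a := 1) one_ne_zero
    · intro z
      have := (hu' z).add (hu z)
      refine this.congr_deriv ?_
      ring
    · intro z
      show u' (z + 2 * Real.pi) + u (z + 2 * Real.pi) = u' z + u z
      rw [hu'per z, huper z]
  have hw0 : ∀ z : ℝ, u' z - u z = 0 := by
    apply expODE_zero (a := -1) (by norm_num)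
    · intro z
      have := (hu' z).sub (hu z)
      refine this.congr_deriv ?_
      ring
    · intro z
      show u' (z + 2 * Real.pi) - u (z + 2 * Real.pi) = u' z - u z
      rw [hu'per z, huper z]
  have hG2 : ∀ z : ℝ, iteratedDeriv 2 g z = -g z := by
    intro z
    have h1 := hv0 z
    have h2 := hw0 z
    have h3 : u z = 0 := by linarith
    simp only [hudef] at h3
    linarith
  -- g'(0) = 0 from evenness
  have hgeven : ∀ z : ℝ, g (-z) = g z := by
    intro z
    simp only [hgdef]
    rw [heven z, hH2even z]
  have hd0 : deriv g 0 = 0 := by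
    have hfun : (fun x => g (-x)) = g := funext hgeven
    have hdc := deriv_comp_neg g 0
    rw [hfun] at hdc
    simp only [neg_zero] at hdc
    linarith
  -- g solves g'' = -g with g'(0) = 0, so g = g(0) cos
  have hgcos : ∀ z : ℝ, g z = g 0 * Real.cos z := by
    have hE : ∀ z : ℝ, HasDerivAt (fun z => g z - g 0 * Real.cos z)
        (iteratedDeriv 1 g z + g 0 * Real.sin z) z := by
      intro z
      have := (hgDer0 z).sub ((Real.hasDerivAt_cos z).const_mul (g 0))
      refine this.congr_deriv ?_
      ring
    have hE' : ∀ z : ℝ, HasDerivAt (fun z => iteratedDeriv 1 g z + g 0 * Real.sin z)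
        (-(g z - g 0 * Real.cos z)) z := by
      intro z
      have := (hgDer 1 (by norm_num) z).add ((Real.hasDerivAt_sin z).const_mul (g 0))
      refine this.congr_deriv ?_
      rw [hG2 z]
      ring
    have hE0 : g 0 - g 0 * Real.cos 0 = 0 := by simp
    have hE'0 : iteratedDeriv 1 g 0 + g 0 * Real.sin 0 = 0 := by
      rw [iteratedDeriv_one]
      simp [hd0]
    have := harmonicODE_zero hE hE' hE0 hE'0
    intro z
    have h1 := this z
    linarith
  -- orthogonality forces g(0) = 0
  have hgint0 : (∫ z in (0:ℝ)..(2 * Real.pi), g z * Real.cos z) = 0 := by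
    have e : ∀ z ∈ Set.uIcc (0:ℝ) (2 * Real.pi),
        g z * Real.cos z = h z * Real.cos z - cdgskH2 k z * Real.cos z := by
      intro z _
      simp only [hgdef]
      ring
    rw [intervalIntegral.integral_congr e, intervalIntegral.integral_sub
      (f := fun x => h x * Real.cos x) (g := fun x => cdgskH2 k x * Real.cos x)
      ((hh.continuous.mul Real.continuous_cos).intervalIntegrable _ _)
      (((hH2smooth.continuous).mul Real.continuous_cos).intervalIntegrable _ _),
      horth, integral_cdgskH2_mul_cos]
    ring
  have hg0 : g 0 = 0 := by
    have e : ∀ z ∈ Set.uIcc (0:ℝ) (2 * Real.pi),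
        g z * Real.cos z = g 0 * Real.cos z ^ 2 := by
      intro z _
      rw [hgcos z]
      ring
    rw [intervalIntegral.integral_congr e, intervalIntegral.integral_const_mul,
      integral_cos_sq_two_pi] at hgint0
    have hpi := Real.pi_ne_zero
    rcases mul_eq_zero.mp hgint0 with h0 | h0
    · exact h0
    · exact absurd h0 hpi
  intro z
  have := hgcos z
  rw [hg0] at this
  simp only [hgdef] at this
  linarith
end

section
/- Let n, m ∈ ℤ satisfy n(1 − n⁴) = m(1 − m⁴). Then either n = m, or both n and m belong to {−1, 0, 1}. Consequently, at Floquet exponent ξ = 0 the only collision among the eigenvalues i ω_{n,0} = i k⁴ n(1 − n⁴) of the unperturbed Bloch operator is the triple collision ω_{1,0} = ω_{−1,0} = ω_{0,0} = 0. -/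
/-- **Collisions of Bloch eigenvalues at `ξ = 0`.**
If integers `n, m` satisfy `n(1 − n⁴) = m(1 − m⁴)`, then either `n = m` or both `n` and
`m` belong to `{−1, 0, 1}`.  Consequently, at Floquet exponent `ξ = 0` the only collision
among the eigenvalues `i k⁴ n (1 − n⁴)` of the unperturbed Bloch operator is the triple
collision `ω_{1,0} = ω_{−1,0} = ω_{0,0} = 0`. -/
theorem cdgsk_eigenvalue_collision_xi_zero (n m : ℤ)
    (h : n * (1 - n ^ 4) = m * (1 - m ^ 4)) :
    n = m ∨ (n ∈ ({-1, 0, 1} : Set ℤ) ∧ m ∈ ({-1, 0, 1} : Set ℤ)) := by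
  by_cases hnm : n = m
  · exact Or.inl hnm
  · right
    have hd : n - m ≠ 0 := sub_ne_zero.mpr hnm
    have hfac : (n - m) * (1 - (n^4 + n^3*m + n^2*m^2 + n*m^3 + m^4)) = 0 := by
      linear_combination h
    have hS : n^4 + n^3*m + n^2*m^2 + n*m^3 + m^4 = 1 := by
      rcases mul_eq_zero.mp hfac with h1 | h2
      · exact absurd h1 hd
      · linarith
    have hkey : (n + m)^4 + 2*(n^2 - m^2)^2 + (n^2 + m^2)^2 = 4 := by
      linear_combination 4 * hS
    have hsum : n^2 + m^2 ≤ 2 := by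
      nlinarith [sq_nonneg ((n+m)^2), sq_nonneg (n^2 - m^2), sq_nonneg (n^2 + m^2)]
    have hn : -1 ≤ n ∧ n ≤ 1 := by
      constructor <;> nlinarith [sq_nonneg m, sq_nonneg (n+1), sq_nonneg (n-1)]
    have hm : -1 ≤ m ∧ m ≤ 1 := by
      constructor <;> nlinarith [sq_nonneg n, sq_nonneg (m+1), sq_nonneg (m-1)]
    constructor <;> simp only [Set.mem_insert_iff, Set.mem_singleton_iff] <;> omega
end

section
/- Let k > 0 and ξ ∈ (−1/2, 1/2] with ξ ≠ 0. Then for all integers n ≠ m, ω_{n,ξ} ≠ ω_{m,ξ}, i.e. k⁴ (n+ξ)(1 − (n+ξ)⁴) ≠ k⁴ (m+ξ)(1 − (m+ξ)⁴). Hence for nonzero Floquet exponent the eigenvalues i ω_{n,ξ} of the unperturbed Bloch operator are pairwise distinct. -/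
lemma xi_ne_int (ξ : ℝ) (hξ : ξ ∈ Set.Ioc (-(1 / 2) : ℝ) (1 / 2)) (hξ0 : ξ ≠ 0)
    (z : ℤ) : ξ ≠ (z : ℝ) := by
  rintro rfl
  obtain ⟨h1, h2⟩ := hξ
  have h1' : (-1 : ℝ) < (z : ℝ) := by linarith
  have h2' : (z : ℝ) < 1 := by linarith
  have hz1 : (-1 : ℤ) < z := by exact_mod_cast h1'
  have hz2 : z < 1 := by exact_mod_cast h2'
  have : z = 0 := by omega
  exact hξ0 (by exact_mod_cast this)

/-- **No collisions of Bloch eigenvalues at nonzero Floquet exponent.**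
Let `k > 0` and `ξ ∈ (−1/2, 1/2]` with `ξ ≠ 0`. Then for all integers `n ≠ m`,
`ω_{n,ξ} ≠ ω_{m,ξ}`, i.e. `k⁴ (n+ξ)(1 − (n+ξ)⁴) ≠ k⁴ (m+ξ)(1 − (m+ξ)⁴)`.
Hence for nonzero Floquet exponent the eigenvalues `i ω_{n,ξ}` of the unperturbed
Bloch operator are pairwise distinct. -/
theorem cdgsk_no_collision_nonzero_xi (k : ℝ) (hk : 0 < k) (ξ : ℝ)
    (hξ : ξ ∈ Set.Ioc (-(1 / 2) : ℝ) (1 / 2)) (hξ0 : ξ ≠ 0)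
    (n m : ℤ) (hnm : n ≠ m) :
    k ^ 4 * ((n : ℝ) + ξ) * (1 - ((n : ℝ) + ξ) ^ 4)
      ≠ k ^ 4 * ((m : ℝ) + ξ) * (1 - ((m : ℝ) + ξ) ^ 4) := by
  intro h
  obtain ⟨x, hxdef⟩ : ∃ x : ℝ, x = (n : ℝ) + ξ := ⟨_, rfl⟩
  obtain ⟨y, hydef⟩ : ∃ y : ℝ, y = (m : ℝ) + ξ := ⟨_, rfl⟩
  rw [← hxdef, ← hydef] at h
  have hk4 : (0 : ℝ) < k ^ 4 := by positivity
  have h1 : x * (1 - x ^ 4) = y * (1 - y ^ 4) := by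
    have h' : k ^ 4 * (x * (1 - x ^ 4)) = k ^ 4 * (y * (1 - y ^ 4)) := by
      linarith [h, mul_assoc (k ^ 4) x (1 - x ^ 4), mul_assoc (k ^ 4) y (1 - y ^ 4)]
    exact mul_left_cancel₀ (ne_of_gt hk4) h'
  have hd : x - y = ((n - m : ℤ) : ℝ) := by rw [hxdef, hydef]; push_cast; ring
  have he0 : n - m ≠ 0 := sub_ne_zero.mpr hnm
  have hxy : x - y ≠ 0 := by
    rw [hd]; exact_mod_cast he0
  -- key identity
  have hE : 5 * (x + y) ^ 4 + 10 * (x + y) ^ 2 * (x - y) ^ 2 + (x - y) ^ 4 = 16 := by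
    have h0 : (x - y) *
        (16 - (5 * (x + y) ^ 4 + 10 * (x + y) ^ 2 * (x - y) ^ 2 + (x - y) ^ 4))
        = 16 * (x * (1 - x ^ 4) - y * (1 - y ^ 4)) := by ring
    rw [h1, sub_self, mul_zero] at h0
    rcases mul_eq_zero.mp h0 with h' | h'
    · exact absurd h' hxy
    · linarith
  have hs0 : (0 : ℝ) ≤ (x + y) ^ 2 := sq_nonneg _
  have habs : 1 ≤ |n - m| := Int.one_le_abs he0
  -- case on size of the gap
  rcases eq_or_lt_of_le habs with hA | hA
  · -- |n - m| = 1, so (x - y)^2 = 1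
    have hd2 : (x - y) ^ 2 = 1 := by
      have : (n - m) ^ 2 = 1 := by
        have := sq_abs (n - m); rw [← hA] at this; omega
      rw [hd]
      exact_mod_cast congrArg (Int.cast : ℤ → ℝ) this
    have hs1 : (x + y) ^ 2 = 1 := by
      have hfac : ((x + y) ^ 2 - 1) * ((x + y) ^ 2 + 3) = 0 := by nlinarith [hE, hd2]
      rcases mul_eq_zero.mp hfac with h' | h'
      · linarith
      · linarith [hs0]
    have hsum : x + y = 1 ∨ x + y = -1 := by
      have : (x + y - 1) * (x + y + 1) = 0 := by nlinarith [hs1]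
      rcases mul_eq_zero.mp this with h' | h'
      · left; linarith
      · right; linarith
    have hdiff : x - y = 1 ∨ x - y = -1 := by
      have : (x - y - 1) * (x - y + 1) = 0 := by nlinarith [hd2]
      rcases mul_eq_zero.mp this with h' | h'
      · left; linarith
      · right; linarith
    have hxint : ∃ c : ℤ, x = (c : ℝ) := by
      rcases hsum with h' | h' <;> rcases hdiff with h'' | h''
      · exact ⟨1, by push_cast; linarith⟩
      · exact ⟨0, by push_cast; linarith⟩
      · exact ⟨0, by push_cast; linarith⟩
      · exact ⟨-1, by push_cast; linarith⟩
    obtain ⟨c, hc⟩ := hxint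
    have : ξ = ((c - n : ℤ) : ℝ) := by push_cast; rw [hxdef] at hc; linarith
    exact xi_ne_int ξ hξ hξ0 (c - n) this
  · -- |n - m| ≥ 2, so (x - y)^2 ≥ 4
    have hA2 : 2 ≤ |n - m| := hA
    have hsq : 4 ≤ (n - m) ^ 2 := by nlinarith [sq_abs (n - m)]
    have hd4 : (4 : ℝ) ≤ (x - y) ^ 2 := by
      rw [hd]
      have : ((4 : ℤ) : ℝ) ≤ (((n - m) ^ 2 : ℤ) : ℝ) := by exact_mod_cast hsq
      push_cast at this ⊢
      nlinarith [this]
    -- then (x-y)^2 = 4 and (x+y)^2 = 0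
    have hdle : (x - y) ^ 2 ≤ 4 := by nlinarith [hE, hs0, sq_nonneg ((x + y) ^ 2), sq_nonneg (x - y)]
    have hdeq : (x - y) ^ 2 = 4 := le_antisymm hdle hd4
    have hs00 : (x + y) ^ 2 = 0 := by nlinarith [hE, hdeq, hs0]
    have hsum0 : x + y = 0 := by
      exact pow_eq_zero_iff (two_ne_zero) |>.mp hs00
    have hdiff : x - y = 2 ∨ x - y = -2 := by
      have : (x - y - 2) * (x - y + 2) = 0 := by nlinarith [hdeq]
      rcases mul_eq_zero.mp this with h' | h'
      · left; linarith
      · right; linarith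
    have hxint : ∃ c : ℤ, x = (c : ℝ) := by
      rcases hdiff with h' | h'
      · exact ⟨1, by push_cast; linarith⟩
      · exact ⟨-1, by push_cast; linarith⟩
    obtain ⟨c, hc⟩ := hxint
    have : ξ = ((c - n : ℤ) : ℝ) := by push_cast; rw [hxdef] at hc; linarith
    exact xi_ne_int ξ hξ hξ0 (c - n) this
end

section
/- Let k > 0. There exists ε > 0 such that for all a, ξ ∈ ℝ with 0 < a² + ξ² < ε², the quantity 108 a⁶ − 3231 a⁴ k⁴ + 48 a² k⁸ + 432 a⁴ k⁴ ξ² − 1488 a² k⁸ ξ² + 16 k¹² ξ² + 576 a² k⁸ ξ⁴ − 128 k¹² ξ⁴ + 256 k¹² ξ⁶ is strictly positive. Consequently the discriminant 15625 k¹² ξ⁶ · (that quantity) of the cubic Q(μ; a, ξ, k) is nonnegative for all sufficiently small a and ξ. -/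
set_option maxHeartbeats 1600000 in
/-- **Positivity of the discriminant factor for small `a, ξ`.**
For `k > 0` there is `ε > 0` such that for all real `a, ξ` with `0 < a² + ξ² < ε²`, the
quantity
`108a⁶ − 3231a⁴k⁴ + 48a²k⁸ + 432a⁴k⁴ξ² − 1488a²k⁸ξ² + 16k¹²ξ² + 576a²k⁸ξ⁴ − 128k¹²ξ⁴
  + 256k¹²ξ⁶`
is strictly positive.  Consequently the discriminant `15625 k¹² ξ⁶ ·(that quantity)` of
the cubic `Q(μ; a, ξ, k)` is nonnegative for all sufficiently small `a` and `ξ`. -/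
theorem cdgsk_discriminant_positive (k : ℝ) (hk : 0 < k) :
    ∃ ε > (0 : ℝ), ∀ a ξ : ℝ, 0 < a ^ 2 + ξ ^ 2 → a ^ 2 + ξ ^ 2 < ε ^ 2 →
      (0 < 108 * a ^ 6 - 3231 * a ^ 4 * k ^ 4 + 48 * a ^ 2 * k ^ 8
          + 432 * a ^ 4 * k ^ 4 * ξ ^ 2 - 1488 * a ^ 2 * k ^ 8 * ξ ^ 2
          + 16 * k ^ 12 * ξ ^ 2 + 576 * a ^ 2 * k ^ 8 * ξ ^ 4
          - 128 * k ^ 12 * ξ ^ 4 + 256 * k ^ 12 * ξ ^ 6) ∧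
      0 ≤ 15625 * k ^ 12 * ξ ^ 6 *
          (108 * a ^ 6 - 3231 * a ^ 4 * k ^ 4 + 48 * a ^ 2 * k ^ 8
            + 432 * a ^ 4 * k ^ 4 * ξ ^ 2 - 1488 * a ^ 2 * k ^ 8 * ξ ^ 2
            + 16 * k ^ 12 * ξ ^ 2 + 576 * a ^ 2 * k ^ 8 * ξ ^ 4
            - 128 * k ^ 12 * ξ ^ 4 + 256 * k ^ 12 * ξ ^ 6) := by
  have hk4 : (0:ℝ) < k ^ 4 := by positivity
  have hk8 : (0:ℝ) < k ^ 8 := by positivity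
  have hk12 : (0:ℝ) < k ^ 12 := by positivity
  refine ⟨min 1 (k ^ 2) / 100, by positivity, ?_⟩
  intro a ξ h0 h1
  have hm1 : min 1 (k ^ 2) ≤ 1 := min_le_left _ _
  have hm2 : min 1 (k ^ 2) ≤ k ^ 2 := min_le_right _ _
  have hm0 : (0:ℝ) < min 1 (k ^ 2) := lt_min one_pos (by positivity)
  have hε2a : (min 1 (k ^ 2) / 100) ^ 2 ≤ 1 / 10000 := by nlinarith
  have hε2b : (min 1 (k ^ 2) / 100) ^ 2 ≤ k ^ 4 / 10000 := by nlinarith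
  have hs1 : a ^ 2 + ξ ^ 2 < 1 / 10000 := lt_of_lt_of_le h1 hε2a
  have hs2 : a ^ 2 + ξ ^ 2 < k ^ 4 / 10000 := lt_of_lt_of_le h1 hε2b
  have h0' : 0 < a ^ 2 + k ^ 4 * ξ ^ 2 := by
    rcases (sq_nonneg ξ).eq_or_lt with h | h
    · nlinarith
    · nlinarith [mul_pos hk4 h]
  have ha2 : (0:ℝ) ≤ a ^ 2 := sq_nonneg a
  have hx2 : (0:ℝ) ≤ ξ ^ 2 := sq_nonneg ξ
  -- bound the negative terms
  have hb1 : 3231 * a ^ 4 * k ^ 4 ≤ (3231 / 10000) * a ^ 2 * k ^ 8 := by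
    nlinarith [mul_nonneg (mul_nonneg ha2 hk4.le) (sub_pos.mpr hs2).le]
  have hb2 : 1488 * a ^ 2 * k ^ 8 * ξ ^ 2 ≤ (1488 / 10000) * a ^ 2 * k ^ 8 := by
    nlinarith [mul_nonneg (mul_nonneg ha2 hk8.le) (sub_pos.mpr hs1).le]
  have hb3 : 128 * k ^ 12 * ξ ^ 4 ≤ (128 / 10000) * k ^ 12 * ξ ^ 2 := by
    nlinarith [mul_nonneg (mul_nonneg hx2 hk12.le) (sub_pos.mpr hs1).le]
  have hpos : 0 < 108 * a ^ 6 - 3231 * a ^ 4 * k ^ 4 + 48 * a ^ 2 * k ^ 8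
          + 432 * a ^ 4 * k ^ 4 * ξ ^ 2 - 1488 * a ^ 2 * k ^ 8 * ξ ^ 2
          + 16 * k ^ 12 * ξ ^ 2 + 576 * a ^ 2 * k ^ 8 * ξ ^ 4
          - 128 * k ^ 12 * ξ ^ 4 + 256 * k ^ 12 * ξ ^ 6 := by
    have hp : 0 < a ^ 2 * k ^ 8 + k ^ 12 * ξ ^ 2 := by nlinarith [mul_pos hk8 h0']
    have t1 : (0:ℝ) ≤ a ^ 6 := by positivity
    have t2 : (0:ℝ) ≤ a ^ 4 * k ^ 4 * ξ ^ 2 := by positivity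
    have t3 : (0:ℝ) ≤ a ^ 2 * k ^ 8 * ξ ^ 4 := by positivity
    have t4 : (0:ℝ) ≤ k ^ 12 * ξ ^ 6 := by positivity
    have t5 : (0:ℝ) ≤ a ^ 2 * k ^ 8 := by positivity
    have t6 : (0:ℝ) ≤ k ^ 12 * ξ ^ 2 := by positivity
    linarith
  exact ⟨hpos, mul_nonneg (by positivity) hpos.le⟩
end

section
/- Let k > 0. There exists ε > 0 such that for all a, ξ ∈ ℝ with |a| < ε and |ξ| < ε, every complex root λ of the polynomial P(λ) := −λ³ − 7 i k⁴ ξ λ² − (75 a² k⁴ ξ² − 8 k⁸ ξ² + 100 k⁸ ξ⁴) λ + (1200 i a² k⁸ ξ³ − 16 i k¹² ξ³ + 100 i k¹² ξ⁵) satisfies Re(λ) = 0. Equivalently, for |a| and |ξ| sufficiently small, all three eigenvalues of the reduced 3×3 spectral matrix of the linearized CDG–SK equation are purely imaginary, which yields the spectral stability of the small-amplitude periodic traveling waves at leading order. -/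
set_option maxHeartbeats 2000000


/-- **Spectral stability at leading order: the reduced eigenvalues are purely imaginary.**
Let `k > 0`.  There exists `ε > 0` such that for all real `a, ξ` with `|a| < ε` and
`|ξ| < ε`, every complex root `λ` of the characteristic polynomial
`P(λ) = −λ³ − 7ik⁴ξ λ² − (75a²k⁴ξ² − 8k⁸ξ² + 100k⁸ξ⁴) λ
  + (1200i a²k⁸ξ³ − 16i k¹²ξ³ + 100i k¹²ξ⁵)`
of the reduced 3×3 spectral matrix of the linearized CDG–SK equation satisfies
`Re λ = 0`. -/
theorem cdgsk_spectral_stability_reduced (k : ℝ) (hk : 0 < k) :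
    ∃ ε > (0 : ℝ), ∀ a ξ : ℝ, |a| < ε → |ξ| < ε →
      ∀ lam : ℂ,
        (-lam ^ 3 - 7 * Complex.I * (k : ℂ) ^ 4 * (ξ : ℂ) * lam ^ 2
            - (75 * (a : ℂ) ^ 2 * (k : ℂ) ^ 4 * (ξ : ℂ) ^ 2
                - 8 * (k : ℂ) ^ 8 * (ξ : ℂ) ^ 2 + 100 * (k : ℂ) ^ 8 * (ξ : ℂ) ^ 4) * lam
            + (1200 * Complex.I * (a : ℂ) ^ 2 * (k : ℂ) ^ 8 * (ξ : ℂ) ^ 3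
                - 16 * Complex.I * (k : ℂ) ^ 12 * (ξ : ℂ) ^ 3
                + 100 * Complex.I * (k : ℂ) ^ 12 * (ξ : ℂ) ^ 5) = 0) →
        lam.re = 0 := by
  refine ⟨min (k ^ 2 / 12) (1 / 5), by positivity, ?_⟩
  intro a ξ ha hξ lam heq
  set u := lam.re with hu
  set v := lam.im with hv
  have hlam : lam = (u : ℂ) + (v : ℂ) * Complex.I := (Complex.re_add_im lam).symm
  rw [hlam] at heq
  rw [Complex.ext_iff] at heq
  obtain ⟨h1, h2⟩ := heq
  simp only [Complex.add_re, Complex.add_im, Complex.sub_re, Complex.sub_im,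
    Complex.neg_re, Complex.neg_im, Complex.mul_re, Complex.mul_im,
    Complex.I_re, Complex.I_im, Complex.ofReal_re, Complex.ofReal_im,
    Complex.zero_re, Complex.zero_im, pow_succ, pow_zero, one_mul,
    Complex.one_re, Complex.one_im, Complex.re_ofNat, Complex.im_ofNat] at h1 h2
  ring_nf at h1 h2
  -- now h1 h2 are real polynomial equations in u v a ξ k
  by_contra hu0
  have hu2 : 0 < u ^ 2 := by positivity
  -- cancel u in the real-part equation
  have key : u * ((3 * v ^ 2 + 14 * k ^ 4 * ξ * v - u ^ 2)
      - (75 * a ^ 2 * k ^ 4 * ξ ^ 2 - 8 * k ^ 8 * ξ ^ 2 + 100 * k ^ 8 * ξ ^ 4)) = 0 := by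
    linear_combination h1
  have hC : 75 * a ^ 2 * k ^ 4 * ξ ^ 2 - 8 * k ^ 8 * ξ ^ 2 + 100 * k ^ 8 * ξ ^ 4
      = 3 * v ^ 2 + 14 * k ^ 4 * ξ * v - u ^ 2 := by
    have := (mul_eq_zero.mp key).resolve_left hu0
    linarith
  have hD : 1200 * a ^ 2 * k ^ 8 * ξ ^ 3 - 16 * k ^ 12 * ξ ^ 3 + 100 * k ^ 12 * ξ ^ 5
      = (2 * v + 7 * k ^ 4 * ξ) * (u ^ 2 + v ^ 2) := by
    linear_combination h2 + v * hC
  have E1 : (3 * k ^ 4 * ξ + 2 * v) * ((4 * k ^ 4 * ξ + v) ^ 2 + u ^ 2)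
      = 500 * k ^ 8 * ξ ^ 3 * (3 * a ^ 2 + k ^ 4 * ξ ^ 2) := by
    linear_combination (-4 * k ^ 4 * ξ) * hC - hD
  have E2 : (6 * k ^ 4 * ξ + 2 * v) * ((k ^ 4 * ξ + v) ^ 2 + u ^ 2)
      = k ^ 8 * ξ ^ 3 * (1275 * a ^ 2 + 200 * k ^ 4 * ξ ^ 2 - 18 * k ^ 4) := by
    linear_combination (-(k ^ 4) * ξ) * hC - hD
  have hak : |a| < k ^ 2 / 12 := lt_of_lt_of_le ha (min_le_left _ _)
  have hxk : |ξ| < 1 / 5 := lt_of_lt_of_le hξ (min_le_right _ _)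
  have ha2 : a ^ 2 < (k ^ 2 / 12) ^ 2 := by
    rw [← sq_abs]; exact pow_lt_pow_left₀ hak (abs_nonneg a) two_ne_zero
  have hx2 : ξ ^ 2 < (1 / 5) ^ 2 := by
    rw [← sq_abs]; exact pow_lt_pow_left₀ hxk (abs_nonneg ξ) two_ne_zero
  have hk4 : (0 : ℝ) < k ^ 4 := by positivity
  have hbound : 1275 * a ^ 2 + 200 * k ^ 4 * ξ ^ 2 - 18 * k ^ 4 < 0 := by
    nlinarith [mul_lt_mul_of_pos_left hx2 hk4]
  rcases lt_trichotomy ξ 0 with hx | hx | hx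
  · -- ξ < 0
    have hxx : 0 < ξ * ξ := mul_pos_of_neg_of_neg hx hx
    have hx3 : ξ ^ 3 < 0 := by nlinarith
    have hA : 500 * k ^ 8 * ξ ^ 3 * (3 * a ^ 2 + k ^ 4 * ξ ^ 2) < 0 := by
      have h1' : (0 : ℝ) < 3 * a ^ 2 + k ^ 4 * ξ ^ 2 := by
        nlinarith [sq_nonneg a, mul_pos hk4 hxx]
      have h2' : 500 * k ^ 8 * ξ ^ 3 < 0 :=
        mul_neg_of_pos_of_neg (by positivity) hx3
      exact mul_neg_of_neg_of_pos h2' h1'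
    have hB : 0 < k ^ 8 * ξ ^ 3 * (1275 * a ^ 2 + 200 * k ^ 4 * ξ ^ 2 - 18 * k ^ 4) := by
      have h2' : k ^ 8 * ξ ^ 3 < 0 :=
        mul_neg_of_pos_of_neg (by positivity) hx3
      exact mul_pos_of_neg_of_neg h2' hbound
    have hG1 : (0 : ℝ) < (4 * k ^ 4 * ξ + v) ^ 2 + u ^ 2 := by positivity
    have hG2 : (0 : ℝ) < (k ^ 4 * ξ + v) ^ 2 + u ^ 2 := by positivity
    have h3 : 3 * k ^ 4 * ξ + 2 * v < 0 := by
      by_contra hle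
      push_neg at hle
      nlinarith [mul_nonneg hle hG1.le]
    have h6 : 0 < 6 * k ^ 4 * ξ + 2 * v := by
      by_contra hle
      push_neg at hle
      nlinarith [mul_nonpos_of_nonpos_of_nonneg hle hG2.le]
    have hK : k ^ 4 * ξ < 0 := mul_neg_of_pos_of_neg hk4 hx
    linarith
  · -- ξ = 0
    subst hx
    have hC0 : (0 : ℝ) = 3 * v ^ 2 - u ^ 2 := by linear_combination hC
    have hD0 : (0 : ℝ) = 2 * v * (u ^ 2 + v ^ 2) := by linear_combination hD
    have hv3 : 8 * v ^ 3 = 0 := by linear_combination -hD0 - 2 * v * hC0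
    have hv0 : v = 0 := by
      have : v ^ 3 = 0 := by linarith
      exact pow_eq_zero_iff (by norm_num) |>.mp this
    rw [hv0] at hC0
    nlinarith
  · -- ξ > 0
    have hx3 : 0 < ξ ^ 3 := pow_pos hx 3
    have hA : 0 < 500 * k ^ 8 * ξ ^ 3 * (3 * a ^ 2 + k ^ 4 * ξ ^ 2) := by
      have h1' : (0 : ℝ) < 3 * a ^ 2 + k ^ 4 * ξ ^ 2 := by
        nlinarith [sq_nonneg a, mul_pos hk4 (pow_pos hx 2)]
      exact mul_pos (mul_pos (by positivity) hx3) h1'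
    have hB : k ^ 8 * ξ ^ 3 * (1275 * a ^ 2 + 200 * k ^ 4 * ξ ^ 2 - 18 * k ^ 4) < 0 :=
      mul_neg_of_pos_of_neg (mul_pos (by positivity) hx3) hbound
    have hG1 : (0 : ℝ) < (4 * k ^ 4 * ξ + v) ^ 2 + u ^ 2 := by positivity
    have hG2 : (0 : ℝ) < (k ^ 4 * ξ + v) ^ 2 + u ^ 2 := by positivity
    have h3 : 0 < 3 * k ^ 4 * ξ + 2 * v := by
      by_contra hle
      push_neg at hle
      nlinarith [mul_nonpos_of_nonpos_of_nonneg hle hG1.le]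
    have h6 : 6 * k ^ 4 * ξ + 2 * v < 0 := by
      by_contra hle
      push_neg at hle
      nlinarith [mul_nonneg hle hG2.le]
    have hK : 0 < k ^ 4 * ξ := mul_pos hk4 hx
    linarith
end
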